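/- Let X be a metric space with an accumulation point. Then there exists a sequence x : ω → X such that Λ_x(FS) is not a closed subset of X. -/

import Mathlib

open Set Filter Topology

/-- `FS(D)`: the set of finite sums of distinct elements of `D`. -/
def FS (D : Set ℕ) : Set ℕ :=
  {n | ∃ α : Finset ℕ, ↑α ⊆ D ∧ α.Nonempty ∧ ∑ i ∈ α, i = n}

variable {X : Type*}

/-- `η` is an `FS`-limit point of the sequence `x : ω → X`. -/
def IsFSLimitPoint [TopologicalSpace X] (x : ℕ → X) (η : X) : Prop :=
  ∃ D : Set ℕ, D.Infinite ∧ ∀ U ∈ 𝓝 η, ∃ K : Set ℕ, K.Finite ∧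
    ∀ n ∈ FS (D \ K), x n ∈ U

/-- `η` is an `FS`-cluster point of the sequence `x : ω → X`. -/
def IsFSClusterPoint [TopologicalSpace X] (x : ℕ → X) (η : X) : Prop :=
  ∀ U ∈ 𝓝 η, ∃ D : Set ℕ, D.Infinite ∧ FS D ⊆ {n | x n ∈ U}

/-- block of a bit-position `j`: the 2-adic valuation of `j+1`. -/
def blk (j : ℕ) : ℕ := (j+1).factorization 2

/-- `n` is pure of block `k`: nonzero and all its binary digits sit at positions of block `k`. -/
def PureB (n k : ℕ) : Prop := n ≠ 0 ∧ ∀ j, n.testBit j = true → blk j = k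

open Classical in
noncomputable def fcol (n : ℕ) : ℕ := if h : ∃ k, PureB n k then h.choose + 1 else 0

lemma two_pow_blk_dvd (j : ℕ) : 2 ^ (blk j) ∣ (j+1) :=
  (Nat.Prime.pow_dvd_iff_le_factorization Nat.prime_two (Nat.succ_ne_zero j)).2 le_rfl

lemma fact2_pos_of_even {u : ℕ} (hu : u ≠ 0) (h : 2 ∣ u) : u.factorization 2 ≠ 0 := by
  intro h0
  have := (Nat.Prime.pow_dvd_iff_le_factorization (k := 1) Nat.prime_two hu).1 (by simpa using h)
  omega

lemma fact2_eq_zero_of_odd {u : ℕ} (h : ¬ 2 ∣ u) : u.factorization 2 = 0 :=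
  Nat.factorization_eq_zero_of_not_dvd h

lemma blk_close {p p' : ℕ} (h1 : p < p') (h2 : p' ≤ p + 2) (he : blk p = blk p') :
    blk p = 0 := by
  by_contra hk
  have hd1 : 2 ∣ (p+1) := dvd_trans (dvd_pow_self 2 hk) (two_pow_blk_dvd p)
  have hd2 : 2 ∣ (p'+1) := by
    have := two_pow_blk_dvd p'
    rw [← he] at this
    exact dvd_trans (dvd_pow_self 2 hk) this
  have hpp : p' = p + 2 := by omega
  obtain ⟨u, hu⟩ := hd1
  have hu0 : u ≠ 0 := by omega
  have hu1 : p' + 1 = 2 * (u + 1) := by omega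
  have e1 : blk p = 1 + u.factorization 2 := by
    unfold blk; rw [hu, Nat.factorization_mul (by norm_num) hu0]
    simp [Nat.Prime.factorization_self Nat.prime_two]
  have e2 : blk p' = 1 + (u+1).factorization 2 := by
    unfold blk; rw [hu1, Nat.factorization_mul (by norm_num) (by omega)]
    simp [Nat.Prime.factorization_self Nat.prime_two]
  rcases Nat.even_or_odd u with he' | ho
  · have h3 := fact2_pos_of_even hu0 he'.two_dvd
    have h4 := fact2_eq_zero_of_odd (u := u + 1) (by rcases he' with ⟨t, ht⟩; omega)
    omega
  · have h3 := fact2_eq_zero_of_odd (u := u) (by rcases ho with ⟨t, ht⟩; omega)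
    have h4 := fact2_pos_of_even (u := u + 1) (by omega) (by rcases ho with ⟨t, ht⟩; omega)
    omega

lemma pureB_unique {n k k' : ℕ} (h : PureB n k) (h' : PureB n k') : k = k' := by
  obtain ⟨i, hi, -⟩ := Nat.exists_most_significant_bit h.1
  rw [← h.2 i hi, ← h'.2 i hi]

lemma fcol_eq_of_pure {n k : ℕ} (h : PureB n k) : fcol n = k + 1 := by
  have hex : ∃ k, PureB n k := ⟨k, h⟩
  rw [fcol]
  rw [dif_pos hex, pureB_unique hex.choose_spec h]

lemma fcol_eq_zero {n : ℕ} (h : ¬∃ k, PureB n k) : fcol n = 0 := by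
  rw [fcol]
  rw [dif_neg h]

lemma exists_pure_of_fcol_ne {n : ℕ} (h : fcol n ≠ 0) : ∃ k, PureB n k ∧ fcol n = k + 1 := by
  by_cases hex : ∃ k, PureB n k
  · exact ⟨hex.choose, hex.choose_spec, by rw [fcol]; rw [dif_pos hex]⟩
  · exact absurd (fcol_eq_zero hex) h

lemma fcol_le_one_of_close_bits {n p p' : ℕ} (hp : n.testBit p = true) (hp' : n.testBit p' = true)
    (h1 : p < p') (h2 : p' ≤ p + 2) : fcol n ≤ 1 := by
  by_cases hex : ∃ k, PureB n k
  · obtain ⟨k, hk⟩ := hex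
    have e1 := hk.2 p hp
    have e2 := hk.2 p' hp'
    have : blk p = 0 := blk_close h1 h2 (e1.trans e2.symm)
    rw [fcol_eq_of_pure hk]; omega
  · rw [fcol_eq_zero hex]; omega

/-- the 2-adic valuation. -/
def v2 (n : ℕ) : ℕ := n.factorization 2

lemma testBit_v2 {n : ℕ} (hn : n ≠ 0) : n.testBit (v2 n) = true := by
  have hd : 2 ^ (v2 n) ∣ n :=
    (Nat.Prime.pow_dvd_iff_le_factorization Nat.prime_two hn).2 le_rfl
  have hnd : ¬ 2 ^ (v2 n + 1) ∣ n := by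
    rw [Nat.Prime.pow_dvd_iff_le_factorization Nat.prime_two hn]
    simp only [v2]; omega
  rw [Nat.testBit_eq_decide_div_mod_eq]
  have h2 : (n / 2 ^ (v2 n)) % 2 = 1 := by
    rcases Nat.mod_two_eq_zero_or_one (n / 2 ^ (v2 n)) with h | h
    · exfalso
      apply hnd
      have h2d : 2 ∣ n / 2 ^ (v2 n) := Nat.dvd_of_mod_eq_zero h
      rw [pow_succ]
      exact (Nat.dvd_div_iff_mul_dvd hd).1 h2d
    · exact h
  simp [h2]

lemma ge_two_pow_of_testBit {n i : ℕ} (h : n.testBit i = true) : 2 ^ i ≤ n := by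
  rw [Nat.testBit_eq_decide_div_mod_eq, decide_eq_true_eq] at h
  by_contra hlt
  rw [Nat.div_eq_of_lt (by omega)] at h
  omega

lemma fcol_le_one_of_mod {v c n : ℕ} (hc : c = 3 ∨ c = 5 ∨ c = 7)
    (h : n % 2 ^ (v + 3) = c * 2 ^ v) : fcol n ≤ 1 := by
  have hq : 2 ^ (v + 3) * (n / 2 ^ (v + 3)) + c * 2 ^ v = n := by
    rw [← h]; exact Nat.div_add_mod n _
  generalize hqq : n / 2 ^ (v + 3) = q at hq
  have hn : n = 2 ^ v * (8 * q + c) := by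
    rw [← hq, pow_add]; ring
  have hdv : n / 2 ^ v = 8 * q + c := by
    rw [hn, Nat.mul_div_cancel_left _ (Nat.pow_pos (by norm_num))]
  have hdv1 : n / 2 ^ (v + 1) = (8 * q + c) / 2 := by
    rw [pow_succ, ← Nat.div_div_eq_div_mul, hdv]
  have hdv2 : n / 2 ^ (v + 2) = (8 * q + c) / 4 := by
    have : (2:ℕ) ^ (v + 2) = 2 ^ v * 4 := by ring
    rw [this, ← Nat.div_div_eq_div_mul, hdv]
  have hb0 : n.testBit v = true := by
    rw [Nat.testBit_eq_decide_div_mod_eq, hdv, decide_eq_true_eq]; omega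
  rcases hc with rfl | rfl | rfl
  · exact fcol_le_one_of_close_bits hb0
      (by rw [Nat.testBit_eq_decide_div_mod_eq, hdv1, decide_eq_true_eq]; omega)
      (Nat.lt_succ_self v) (by omega)
  · exact fcol_le_one_of_close_bits hb0
      (by rw [Nat.testBit_eq_decide_div_mod_eq, hdv2, decide_eq_true_eq]; omega)
      (by omega) (by omega)
  · exact fcol_le_one_of_close_bits hb0
      (by rw [Nat.testBit_eq_decide_div_mod_eq, hdv1, decide_eq_true_eq]; omega)
      (Nat.lt_succ_self v) (by omega)

lemma sum_range_two_pow (m : ℕ) : ∑ j ∈ Finset.range m, 2 ^ j = 2 ^ m - 1 := by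
  induction m with
  | zero => simp
  | succ m ih =>
    rw [Finset.sum_range_succ, ih]
    have : (1:ℕ) ≤ 2 ^ m := Nat.one_le_two_pow
    have : (2:ℕ) ^ (m+1) = 2 ^ m + 2 ^ m := by ring
    omega

lemma testBit_sum_two_pow (S : Finset ℕ) (i : ℕ) :
    (∑ j ∈ S, 2 ^ j).testBit i = true ↔ i ∈ S := by
  induction S using Finset.strongInduction with
  | _ S ih =>
    rcases S.eq_empty_or_nonempty with rfl | hne
    · simp
    · set m := S.max' hne with hm
      have hmem : m ∈ S := S.max'_mem hne
      have hsplit : ∑ j ∈ S, 2 ^ j = 2 ^ m + ∑ j ∈ S.erase m, 2 ^ j := by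
        rw [← Finset.add_sum_erase _ _ hmem]
      have hsub : S.erase m ⊆ Finset.range m := by
        intro j hj
        rw [Finset.mem_range]
        have := Finset.mem_erase.1 hj
        exact lt_of_le_of_ne (S.le_max' j this.2) this.1
      have hrest : ∑ j ∈ S.erase m, 2 ^ j < 2 ^ m := by
        calc ∑ j ∈ S.erase m, 2 ^ j ≤ ∑ j ∈ Finset.range m, 2 ^ j :=
              Finset.sum_le_sum_of_subset hsub
        _ = 2 ^ m - 1 := sum_range_two_pow m
        _ < 2 ^ m := by have : (1:ℕ) ≤ 2 ^ m := Nat.one_le_two_pow; omega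
      have iherase := ih (S.erase m) (Finset.erase_ssubset hmem)
      rw [hsplit]
      rcases lt_trichotomy i m with hlt | rfl | hgt
      · have : (2 ^ m + ∑ j ∈ S.erase m, 2 ^ j).testBit i
            = ((2 ^ m + ∑ j ∈ S.erase m, 2 ^ j) % 2 ^ m).testBit i := by
          rw [Nat.testBit_mod_two_pow]
          simp [hlt]
        rw [this, Nat.add_mod_left, Nat.mod_eq_of_lt hrest, iherase]
        constructor
        · exact fun h => Finset.mem_of_mem_erase h
        · intro h; exact Finset.mem_erase.2 ⟨by omega, h⟩
      · rw [Nat.testBit_eq_decide_div_mod_eq]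
        have : (2 ^ m + ∑ j ∈ S.erase m, 2 ^ j) / 2 ^ m = 1 := by
          rw [Nat.add_div_left _ (Nat.pow_pos (by norm_num)),
            Nat.div_eq_of_lt hrest]
        rw [this]
        simpa using hmem
      · have : 2 ^ m + ∑ j ∈ S.erase m, 2 ^ j < 2 ^ i := by
          have h1 : (2:ℕ) ^ (m + 1) ≤ 2 ^ i := Nat.pow_le_pow_right (by norm_num) hgt
          have : (2:ℕ) ^ (m+1) = 2 ^ m + 2 ^ m := by ring
          omega
        rw [Nat.testBit_lt_two_pow this]
        constructor
        · simp
        · intro h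
          exact absurd (S.le_max' i h) (by omega)

lemma FS_mono {A B : Set ℕ} (h : A ⊆ B) : FS A ⊆ FS B := by
  rintro n ⟨α, hα, hne, rfl⟩
  exact ⟨α, fun a ha => h (hα ha), hne, rfl⟩

lemma single_mem_FS {A : Set ℕ} {d : ℕ} (h : d ∈ A) : d ∈ FS A :=
  ⟨{d}, by simpa using h, Finset.singleton_nonempty d, by simp⟩

lemma pair_mem_FS {A : Set ℕ} {a b : ℕ} (ha : a ∈ A) (hb : b ∈ A) (hab : a ≠ b) :
    a + b ∈ FS A := by
  refine ⟨{a, b}, ?_, ⟨a, by simp⟩, ?_⟩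
  · intro x hx
    simp only [Finset.coe_insert, Finset.coe_singleton, Set.mem_insert_iff,
      Set.mem_singleton_iff] at hx
    rcases hx with rfl | rfl <;> assumption
  · rw [Finset.sum_insert (by simpa using hab), Finset.sum_singleton]

lemma triple_mem_FS {A : Set ℕ} {a b c : ℕ} (ha : a ∈ A) (hb : b ∈ A) (hc : c ∈ A)
    (hab : a ≠ b) (hac : a ≠ c) (hbc : b ≠ c) : a + b + c ∈ FS A := by
  refine ⟨{a, b, c}, ?_, ⟨a, by simp⟩, ?_⟩
  · intro x hx
    simp only [Finset.coe_insert, Finset.coe_singleton, Set.mem_insert_iff,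
      Set.mem_singleton_iff] at hx
    rcases hx with rfl | rfl | rfl <;> assumption
  · rw [Finset.sum_insert (by simp [hab, hac]), Finset.sum_insert (by simpa using hbc),
      Finset.sum_singleton, add_assoc]

/-- the witness set for block `k` : powers of two with exponent of block `k`. -/
def Ek (k : ℕ) : Set ℕ := {n | ∃ j, n = 2 ^ j ∧ blk j = k}

lemma Ek_infinite (k : ℕ) : (Ek k).Infinite := by
  apply Set.infinite_of_injective_forall_mem
    (f := fun m : ℕ => 2 ^ (2 ^ k * (2 * m + 1) - 1))
  · intro m m' hmm
    have h2 : (2:ℕ) ^ k > 0 := Nat.pow_pos (by norm_num)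
    have := Nat.pow_right_injective (le_refl 2) hmm
    have h1 : 2 ^ k * (2 * m + 1) ≥ 1 := by nlinarith
    have h1' : 2 ^ k * (2 * m' + 1) ≥ 1 := by nlinarith
    have : 2 ^ k * (2 * m + 1) = 2 ^ k * (2 * m' + 1) := by omega
    have := Nat.eq_of_mul_eq_mul_left h2 this
    omega
  · intro m
    refine ⟨2 ^ k * (2 * m + 1) - 1, rfl, ?_⟩
    rw [blk]
    have h2 : (2:ℕ) ^ k > 0 := Nat.pow_pos (by norm_num)
    have h1 : 1 ≤ 2 ^ k * (2 * m + 1) := Nat.one_le_iff_ne_zero.2 (by positivity)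
    have : 2 ^ k * (2 * m + 1) - 1 + 1 = 2 ^ k * (2 * m + 1) := by omega
    rw [this, Nat.factorization_mul (by positivity) (by omega)]
    simp [Nat.Prime.factorization_pow, Nat.Prime.factorization_self Nat.prime_two,
      Nat.factorization_eq_zero_of_not_dvd (by omega : ¬ 2 ∣ 2*m+1)]

lemma pure_of_mem_FS_Ek {k n : ℕ} (h : n ∈ FS (Ek k)) : PureB n k := by
  obtain ⟨α, hα, hne, rfl⟩ := h
  choose g hg1 hg2 using fun a (ha : a ∈ α) => hα ha
  -- exponent set
  classical
  set S := α.attach.image (fun a => g a.1 a.2) with hS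
  have hsum : ∑ i ∈ α, i = ∑ j ∈ S, 2 ^ j := by
    rw [hS, Finset.sum_image ?inj]
    · calc ∑ i ∈ α, i = ∑ x ∈ α.attach, (x : ℕ) := (Finset.sum_attach α _).symm
        _ = ∑ x ∈ α.attach, 2 ^ g x.1 x.2 := Finset.sum_congr rfl (fun a _ => hg1 a.1 a.2)
    case inj =>
      intro a _ b _ hab
      have : (a : ℕ) = (b : ℕ) := by simp only at hab; rw [hg1 a.1 a.2, hg1 b.1 b.2, hab]
      exact Subtype.ext this
  constructor
  · rw [hsum]
    obtain ⟨a, ha⟩ := hne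
    have hSne : S.Nonempty := ⟨g a ha, Finset.mem_image.2 ⟨⟨a, ha⟩, Finset.mem_attach _ _, rfl⟩⟩
    obtain ⟨j, hj⟩ := hSne
    have h1 : 2 ^ j ≤ ∑ j ∈ S, 2 ^ j := Finset.single_le_sum (fun _ _ => Nat.zero_le _) hj
    have h2 : 0 < 2 ^ j := Nat.pow_pos (by norm_num)
    omega
  · intro j hj
    rw [hsum] at hj
    rw [testBit_sum_two_pow] at hj
    obtain ⟨a, -, rfl⟩ := Finset.mem_image.1 hj
    exact hg2 a.1 a.2

lemma pigeonhole_infinite {W : Set ℕ} (hW : W.Infinite) (g : ℕ → ℕ) (m : ℕ)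
    (hg : ∀ a ∈ W, g a < m) : ∃ r, {a ∈ W | g a = r}.Infinite := by
  by_contra hc
  push_neg at hc
  apply hW
  have hsub : W ⊆ ⋃ r ∈ Finset.range m, {a ∈ W | g a = r} := by
    intro a ha
    simp only [Set.mem_iUnion, Finset.mem_range, Set.mem_setOf_eq]
    exact ⟨g a, hg a ha, ha, rfl⟩
  exact Set.Finite.subset
    (Set.Finite.biUnion (Finset.range m).finite_toSet (fun r _ => hc r)) hsub

lemma adversary {D : Set ℕ} (hD : D.Infinite) :
    ∃ N, ∀ K : Set ℕ, K.Finite → ∃ n ∈ FS (D \ K), fcol n ≤ N := by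
  classical
  have hD'inf : (D \ {0}).Infinite := hD.diff (Set.finite_singleton 0)
  set D' := D \ {0} with hD'def
  have hPp : ∀ v : ℕ, 0 < 2 ^ v := fun v => Nat.pow_pos (by norm_num)
  by_cases hA : ∃ v, {d ∈ D' | v2 d = v}.Infinite
  · -- Case A : infinitely many elements share the exact 2-adic valuation v
    obtain ⟨v, hv⟩ := hA
    refine ⟨1, fun K hK => ?_⟩
    have hW : ({d ∈ D' | v2 d = v} \ K).Infinite := hv.diff hK
    obtain ⟨r, hr⟩ := pigeonhole_infinite hW (· % 2 ^ (v + 3)) (2 ^ (v + 3))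
      (fun a _ => Nat.mod_lt _ (hPp _))
    obtain ⟨d1, hd1⟩ := hr.nonempty
    have hd1D : d1 ∈ D \ K := ⟨hd1.1.1.1.1, hd1.1.2⟩
    have hd10 : d1 ≠ 0 := by
      have := hd1.1.1.1.2; simpa using this
    have hd1v : v2 d1 = v := hd1.1.1.2
    have hd1r : d1 % 2 ^ (v + 3) = r := hd1.2
    have hdvd : 2 ^ v ∣ d1 := by
      rw [← hd1v]
      exact (Nat.Prime.pow_dvd_iff_le_factorization Nat.prime_two hd10).2 le_rfl
    have hndvd : ¬ 2 ^ (v + 1) ∣ d1 := by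
      rw [Nat.Prime.pow_dvd_iff_le_factorization Nat.prime_two hd10]
      have : d1.factorization 2 = v := hd1v
      omega
    have hrdvd : 2 ^ v ∣ r := by
      rw [← hd1r]
      exact (Nat.dvd_mod_iff (pow_dvd_pow 2 (by omega))).2 hdvd
    obtain ⟨s, hrs⟩ := hrdvd
    have hm8 : (2:ℕ) ^ (v + 3) = 2 ^ v * 8 := by rw [pow_add]; norm_num
    have hrlt : r < 2 ^ (v + 3) := by rw [← hd1r]; exact Nat.mod_lt _ (hPp _)
    have hslt : s < 8 := by
      apply Nat.lt_of_mul_lt_mul_left (a := 2 ^ v)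
      rw [← hrs, ← hm8]; exact hrlt
    have hsodd : s % 2 = 1 := by
      rcases Nat.mod_two_eq_zero_or_one s with h | h
      · exfalso
        apply hndvd
        have hrd2 : 2 ^ (v + 1) ∣ r := by
          rw [hrs, pow_succ]
          exact Nat.mul_dvd_mul_left _ (Nat.dvd_of_mod_eq_zero h)
        exact (Nat.dvd_mod_iff (pow_dvd_pow 2 (by omega : v + 1 ≤ v + 3))).1 (by rw [hd1r]; exact hrd2)
      · exact h
    have hs1357 : s = 1 ∨ s = 3 ∨ s = 5 ∨ s = 7 := by omega
    rcases hs1357 with rfl | hs' | hs' | hs'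
    · -- s = 1 : take the sum of three elements
      have hre : r = 2 ^ v := by omega
      obtain ⟨d2, hd2⟩ := (hr.diff (Set.finite_singleton d1)).nonempty
      obtain ⟨d3, hd3⟩ := (hr.diff ((Set.finite_singleton d2).insert d1)).nonempty
      have hd2r : d2 % 2 ^ (v + 3) = r := hd2.1.2
      have hd3r : d3 % 2 ^ (v + 3) = r := hd3.1.2
      have hd2D : d2 ∈ D \ K := ⟨hd2.1.1.1.1.1, hd2.1.1.2⟩
      have hd3D : d3 ∈ D \ K := ⟨hd3.1.1.1.1.1, hd3.1.1.2⟩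
      have h12 : d1 ≠ d2 := fun h => hd2.2 (by rw [← h]; exact rfl)
      have h13 : d1 ≠ d3 := fun h => hd3.2 (by rw [← h]; exact Set.mem_insert _ _)
      have h23 : d2 ≠ d3 := fun h => hd3.2 (by rw [← h]; exact Set.mem_insert_iff.2 (Or.inr rfl))
      refine ⟨d1 + d2 + d3, triple_mem_FS hd1D hd2D hd3D h12 h13 h23, ?_⟩
      apply fcol_le_one_of_mod (v := v) (c := 3) (by omega)
      have e1 : (d1 + d2 + d3) % 2 ^ (v + 3) = ((r + r) % 2 ^ (v + 3) + r) % 2 ^ (v + 3) := by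
        rw [Nat.add_mod, Nat.add_mod d1 d2, hd1r, hd2r, hd3r]
      have hlt1 : r + r < 2 ^ (v + 3) := by omega
      have hlt2 : r + r + r < 2 ^ (v + 3) := by omega
      rw [e1, Nat.mod_eq_of_lt hlt1, Nat.mod_eq_of_lt hlt2]
      omega
    all_goals {
      refine ⟨d1, single_mem_FS hd1D, ?_⟩
      apply fcol_le_one_of_mod (v := v) (c := s) (by omega)
      rw [hd1r, hrs, Nat.mul_comm] }
  · -- Case B : the 2-adic valuation tends to infinity on D'
    push_neg at hA
    have hfib : ∀ v, {d ∈ D' | v2 d = v}.Finite := fun v => hA v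
    have hlow : ∀ A : ℕ, {d ∈ D' | v2 d < A}.Finite := by
      intro A
      apply Set.Finite.subset
        (Set.Finite.biUnion (Finset.range A).finite_toSet (fun v _ => hfib v))
      intro d hd
      exact Set.mem_biUnion (Finset.mem_coe.2 (Finset.mem_range.2 hd.2)) ⟨hd.1, rfl⟩
    by_cases hB : ∃ c, {d ∈ D' | fcol d = c}.Infinite
    · obtain ⟨c, hc⟩ := hB
      refine ⟨c, fun K hK => ?_⟩
      obtain ⟨d, hd⟩ := (hc.diff hK).nonempty
      exact ⟨d, single_mem_FS ⟨hd.1.1.1, hd.2⟩, le_of_eq hd.1.2⟩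
    · push_neg at hB
      have hfibf : ∀ c, {d ∈ D' | fcol d = c}.Finite := fun c => hB c
      refine ⟨0, fun K hK => ?_⟩
      obtain ⟨a, ha⟩ := (hD'inf.diff hK).nonempty
      have haD : a ∈ D \ K := ⟨ha.1.1, ha.2⟩
      have ha0 : a ≠ 0 := by have := ha.1.2; simpa using this
      by_cases hfa : fcol a = 0
      · exact ⟨a, single_mem_FS haD, le_of_eq hfa⟩
      obtain ⟨k, hpa, hfa'⟩ := exists_pure_of_fcol_ne hfa
      -- choose b with huge valuation and a different pure color
      have hbad : ({d ∈ D' | v2 d < a} ∪ {d ∈ D' | fcol d = fcol a} ∪ {a} ∪ K).Finite :=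
        (((hlow a).union (hfibf (fcol a))).union (Set.finite_singleton a)).union hK
      obtain ⟨b, hb⟩ := (hD'inf.diff hbad).nonempty
      have hbD' : b ∈ D' := hb.1
      have hb0 : b ≠ 0 := by have := hb.1.2; simpa using this
      have hbD : b ∈ D \ K := ⟨hb.1.1, fun h => hb.2 (by simp [h])⟩
      have hbv : ¬ v2 b < a := fun h => hb.2 (by simp only [Set.mem_union]; exact Or.inl (Or.inl (Or.inl ⟨hbD', h⟩)))
      have hbf : fcol b ≠ fcol a := fun h => hb.2 (by simp only [Set.mem_union]; exact Or.inl (Or.inl (Or.inr ⟨hbD', h⟩)))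
      have hba : b ≠ a := fun h => hb.2 (by simp [h])
      by_cases hfb : fcol b = 0
      · exact ⟨b, single_mem_FS hbD, le_of_eq hfb⟩
      obtain ⟨l, hpb, hfb'⟩ := exists_pure_of_fcol_ne hfb
      have hkl : k ≠ l := fun h => hbf (by rw [hfa', hfb', h])
      refine ⟨a + b, pair_mem_FS haD hbD (Ne.symm hba), ?_⟩
      rw [fcol_eq_zero]
      rintro ⟨m, hm⟩
      have halt : a < 2 ^ a := Nat.lt_two_pow_self
      have hb2A : 2 ^ a ∣ b := by
        rw [Nat.Prime.pow_dvd_iff_le_factorization Nat.prime_two hb0]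
        have : ¬ b.factorization 2 < a := hbv
        omega
      -- low bit of a survives in a + b
      have hj1 : a.testBit (v2 a) = true := testBit_v2 ha0
      have hj1lt : v2 a < a := by
        have h1 := ge_two_pow_of_testBit hj1
        by_contra hcon
        have : (2:ℕ) ^ a ≤ 2 ^ (v2 a) := Nat.pow_le_pow_right (by norm_num) (by omega)
        omega
      have hmodab : (a + b) % 2 ^ a = a := by
        have hbz : b % 2 ^ a = 0 := Nat.eq_zero_of_dvd_of_lt ((Nat.dvd_mod_iff (dvd_refl (2 ^ a))).2 hb2A) (Nat.mod_lt _ (hPp a))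
        rw [Nat.add_mod, hbz, Nat.mod_eq_of_lt halt, add_zero, Nat.mod_eq_of_lt halt]
      have hbitn1 : (a + b).testBit (v2 a) = true := by
        have e := Nat.testBit_mod_two_pow (a + b) a (v2 a)
        rw [hmodab, hj1] at e
        have : decide (v2 a < a) = true := by simp [hj1lt]
        rw [this] at e
        simpa using e.symm
      -- low bit of b survives in a + b
      have hj2 : b.testBit (v2 b) = true := testBit_v2 hb0
      have hj2a : a ≤ v2 b := by omega
      have hdivab : (a + b) / 2 ^ a = b / 2 ^ a := by
        obtain ⟨b', rfl⟩ := hb2A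
        rw [Nat.add_mul_div_left _ _ (hPp a), Nat.div_eq_of_lt halt,
          Nat.mul_div_cancel_left _ (hPp a)]
        omega
      have hbitn2 : (a + b).testBit (v2 b) = true := by
        have e1 : (a + b).testBit (v2 b) = ((a + b) >>> a).testBit (v2 b - a) := by
          rw [Nat.testBit_shiftRight]
          congr 1
          omega
        have e2 : b.testBit (v2 b) = (b >>> a).testBit (v2 b - a) := by
          rw [Nat.testBit_shiftRight]
          congr 1
          omega
        rw [e1, Nat.shiftRight_eq_div_pow, hdivab, ← Nat.shiftRight_eq_div_pow, ← e2]
        exact hj2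
      have e1 : m = k := by rw [← hm.2 (v2 a) hbitn1, hpa.2 (v2 a) hj1]
      have e2 : m = l := by rw [← hm.2 (v2 b) hbitn2, hpb.2 (v2 b) hj2]
      exact hkl (e1 ▸ e2)

theorem exists_seq_lambda_fs_not_closed
    [MetricSpace X] (hacc : ∃ p : X, (𝓝[≠] p).NeBot) :
    ∃ x : ℕ → X, ¬ IsClosed {η | IsFSLimitPoint x η} := by
  obtain ⟨p, hp⟩ := hacc
  have hy : ∀ c : ℕ, ∃ y : X, y ≠ p ∧ dist y p < 1 / (c + 1) := by
    intro c
    have hpos : (0:ℝ) < 1 / (c + 1) := by positivity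
    have hball : Metric.ball p (1 / (c + 1)) ∈ 𝓝 p := Metric.ball_mem_nhds p hpos
    have hmem : Metric.ball p (1 / (c + 1)) ∩ {p}ᶜ ∈ 𝓝[≠] p :=
      Filter.inter_mem (mem_nhdsWithin_of_mem_nhds hball) self_mem_nhdsWithin
    obtain ⟨z, hz1, hz2⟩ := Filter.nonempty_of_mem hmem
    exact ⟨z, hz2, Metric.mem_ball.1 hz1⟩
  choose y hyp hyd using hy
  refine ⟨fun n => y (fcol n), ?_⟩
  intro hcl
  have hmem : ∀ k : ℕ, IsFSLimitPoint (fun n => y (fcol n)) (y (k + 1)) := by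
    intro k
    refine ⟨Ek k, Ek_infinite k, fun U hU => ⟨∅, Set.finite_empty, ?_⟩⟩
    intro n hn
    rw [Set.diff_empty] at hn
    have he := fcol_eq_of_pure (pure_of_mem_FS_Ek hn)
    simp only [he]
    exact mem_of_mem_nhds hU
  have hclos : p ∈ closure {η | IsFSLimitPoint (fun n => y (fcol n)) η} := by
    rw [Metric.mem_closure_iff]
    intro ε hε
    obtain ⟨c, hc⟩ := exists_nat_one_div_lt hε
    refine ⟨y (c + 1), hmem c, ?_⟩
    rw [dist_comm]
    have h1 : dist (y (c + 1)) p < 1 / ((c:ℝ) + 1 + 1) := by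
      have := hyd (c + 1)
      push_cast at this
      linarith
    have h2 : 1 / ((c:ℝ) + 1 + 1) ≤ 1 / ((c:ℝ) + 1) := by
      apply one_div_le_one_div_of_le
      · positivity
      · linarith
    linarith
  have hpΛ : p ∈ {η | IsFSLimitPoint (fun n => y (fcol n)) η} := hcl.closure_subset hclos
  obtain ⟨D, hD, hcon⟩ := hpΛ
  obtain ⟨N, hN⟩ := adversary hD
  have hne : (Finset.range (N + 1)).Nonempty := ⟨0, by simp⟩
  set ε := (Finset.range (N + 1)).inf' hne (fun c => dist (y c) p) with hεdef
  have hεpos : 0 < ε := by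
    rw [hεdef, Finset.lt_inf'_iff]
    intro c _
    exact dist_pos.2 (hyp c)
  obtain ⟨K, hKf, hKU⟩ := hcon (Metric.ball p ε) (Metric.ball_mem_nhds p hεpos)
  obtain ⟨n, hnFS, hn⟩ := hN K hKf
  have h1 := hKU n hnFS
  have h2 : ε ≤ dist (y (fcol n)) p :=
    Finset.inf'_le _ (Finset.mem_range.2 (by omega))
  rw [Metric.mem_ball] at h1
  exact absurd h1 (not_lt.2 h2)
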